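/- Every S₁(Γ,Γ)-space has the sequence selection property: if for every sequence (U_n) of γ-covers of X one can select U_n ∈ U_n so that {U_n : n ∈ ℕ} is a γ-cover of X, then whenever f_{n,i} are continuous real-valued functions on X with lim_{i→∞} f_{n,i}(x) = 0 for every x ∈ X and every n, there exist indices i_n such that lim_{n→∞} f_{n,i_n}(x) = 0 for every x ∈ X. -/

import Mathlib

open Filter Set Topology

/-- A γ-cover of `X`: an infinite family of open sets such that every point
belongs to all but finitely many members. -/
def IsGammaCover {X : Type*} [TopologicalSpace X] (𝒰 : Set (Set X)) : Prop :=
  𝒰.Infinite ∧ (∀ U ∈ 𝒰, IsOpen U) ∧ ∀ x : X, {U ∈ 𝒰 | x ∉ U}.Finite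

/-- The selection property `S₁(Γ,Γ)`. -/
def S1GammaGamma (X : Type*) [TopologicalSpace X] : Prop :=
  ∀ 𝒰 : ℕ → Set (Set X), (∀ n, IsGammaCover (𝒰 n)) →
    ∃ U : ℕ → Set X, (∀ n, U n ∈ 𝒰 n) ∧ IsGammaCover (Set.range U)

/-- The sequence selection property. -/
def SSP (X : Type*) [TopologicalSpace X] : Prop :=
  ∀ f : ℕ → ℕ → X → ℝ, (∀ n i, Continuous (f n i)) →
    (∀ n x, Tendsto (fun i => f n i x) atTop (nhds 0)) →
    ∃ i : ℕ → ℕ, ∀ x, Tendsto (fun n => f n (i n) x) atTop (nhds 0)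


section Disjointify

variable {α : Type*}

noncomputable def pickNew (𝒢 : ℕ → Set α) (h𝒢 : ∀ n, (𝒢 n).Infinite)
    (n : ℕ) (L : List α) : α :=
  (((h𝒢 n).diff L.finite_toSet).nonempty).some

lemma pickNew_spec (𝒢 : ℕ → Set α) (h𝒢 : ∀ n, (𝒢 n).Infinite) (n : ℕ) (L : List α) :
    pickNew 𝒢 h𝒢 n L ∈ 𝒢 n ∧ pickNew 𝒢 h𝒢 n L ∉ L := by
  have := (((h𝒢 n).diff L.finite_toSet).nonempty).some_mem
  exact ⟨this.1, fun hm => this.2 (by simpa [pickNew] using hm)⟩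

noncomputable def pickList (𝒢 : ℕ → Set α) (h𝒢 : ∀ n, (𝒢 n).Infinite) (e : ℕ → ℕ) :
    ℕ → List α
  | 0 => []
  | (m+1) => pickList 𝒢 h𝒢 e m ++ [pickNew 𝒢 h𝒢 (e m) (pickList 𝒢 h𝒢 e m)]

noncomputable def pickSeq (𝒢 : ℕ → Set α) (h𝒢 : ∀ n, (𝒢 n).Infinite) (e : ℕ → ℕ) (m : ℕ) : α :=
  pickNew 𝒢 h𝒢 (e m) (pickList 𝒢 h𝒢 e m)

lemma pickSeq_mem (𝒢 : ℕ → Set α) (h𝒢 : ∀ n, (𝒢 n).Infinite) (e : ℕ → ℕ) (m : ℕ) :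
    pickSeq 𝒢 h𝒢 e m ∈ 𝒢 (e m) :=
  (pickNew_spec 𝒢 h𝒢 (e m) (pickList 𝒢 h𝒢 e m)).1

lemma mem_pickList (𝒢 : ℕ → Set α) (h𝒢 : ∀ n, (𝒢 n).Infinite) (e : ℕ → ℕ) :
    ∀ m j, j < m → pickSeq 𝒢 h𝒢 e j ∈ pickList 𝒢 h𝒢 e m := by
  intro m
  induction m with
  | zero => intro j hj; omega
  | succ m ih =>
    intro j hj
    rcases Nat.lt_succ_iff_lt_or_eq.mp hj with hj | rfl
    · simp [pickList, List.mem_append, ih j hj]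
    · simp [pickList, pickSeq]

lemma pickSeq_not_mem (𝒢 : ℕ → Set α) (h𝒢 : ∀ n, (𝒢 n).Infinite) (e : ℕ → ℕ) (m : ℕ) :
    pickSeq 𝒢 h𝒢 e m ∉ pickList 𝒢 h𝒢 e m :=
  (pickNew_spec 𝒢 h𝒢 (e m) (pickList 𝒢 h𝒢 e m)).2

lemma pickSeq_injective (𝒢 : ℕ → Set α) (h𝒢 : ∀ n, (𝒢 n).Infinite) (e : ℕ → ℕ) :
    Function.Injective (pickSeq 𝒢 h𝒢 e) := by
  have key : ∀ j m, j < m → pickSeq 𝒢 h𝒢 e j ≠ pickSeq 𝒢 h𝒢 e m := by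
    intro j m hlt hjm
    have h1 : pickSeq 𝒢 h𝒢 e j ∈ pickList 𝒢 h𝒢 e m := mem_pickList 𝒢 h𝒢 e m j hlt
    rw [hjm] at h1
    exact pickSeq_not_mem 𝒢 h𝒢 e m h1
  intro j m hjm
  rcases lt_trichotomy j m with hh | hh | hh
  · exact absurd hjm (key j m hh)
  · exact hh
  · exact absurd hjm.symm (key m j hh)

lemma exists_disjoint_selection (𝒢 : ℕ → Set α) (h𝒢 : ∀ n, (𝒢 n).Infinite) :
    ∃ g : ℕ × ℕ → α, Function.Injective g ∧ ∀ n k, g (n, k) ∈ 𝒢 n := by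
  classical
  refine ⟨fun p => pickSeq 𝒢 h𝒢 (fun m => (Denumerable.ofNat (ℕ × ℕ) m).1)
      (Encodable.encode p), ?_, ?_⟩
  · intro p q hpq
    exact Encodable.encode_injective (pickSeq_injective 𝒢 h𝒢 _ hpq)
  · intro n k
    have := pickSeq_mem 𝒢 h𝒢 (fun m => (Denumerable.ofNat (ℕ × ℕ) m).1)
      (Encodable.encode (n, k))
    simpa using this

end Disjointify

theorem S1GammaGamma_implies_SSP (X : Type*) [TopologicalSpace X]
    (h : S1GammaGamma X) : SSP X := by
  classical
  intro f hc hl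
  set U0 : ℕ → ℕ → Set X := fun n i => {x | |f n i x| < 1 / ((n : ℝ) + 1)} with hU0
  have hpos : ∀ n : ℕ, (0 : ℝ) < 1 / ((n : ℝ) + 1) := fun n => by positivity
  have hopen : ∀ n i, IsOpen (U0 n i) := fun n i =>
    isOpen_lt ((hc n i).abs) continuous_const
  have hbadI : ∀ n x, {i | x ∉ U0 n i}.Finite := by
    intro n x
    have habs : Tendsto (fun i => |f n i x|) atTop (nhds 0) := by
      simpa using (hl n x).abs
    have h2 : ∀ᶠ i in atTop, x ∈ U0 n i := habs.eventually (gt_mem_nhds (hpos n))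
    rw [← Nat.cofinite_eq_atTop] at h2
    exact Filter.eventually_cofinite.mp h2
  set P : ℕ → Prop := fun n => ∃ i, ∀ x, x ∈ U0 n i with hP
  have hPfin : ∀ n, (Set.range (U0 n)).Finite → P n := by
    intro n hfin
    haveI : Finite (Set.range (U0 n)) := hfin.to_subtype
    obtain ⟨W, hWfib⟩ := Finite.exists_infinite_fiber (Set.rangeFactorization (U0 n))
    have hfib : {i | U0 n i = (W : Set X)}.Infinite := by
      rw [← Set.infinite_coe_iff]
      refine Infinite.of_injective
        (fun p : ↥(Set.rangeFactorization (U0 n) ⁻¹' {W}) =>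
          (⟨p.1, congrArg Subtype.val p.2⟩ :
            {i | U0 n i = (W : Set X)})) ?_
      intro a b hab
      have h2 := congrArg Subtype.val hab
      exact Subtype.ext h2
    obtain ⟨i0, hi0⟩ := hfib.nonempty
    refine ⟨i0, fun x => ?_⟩
    obtain ⟨i, hiW, hix⟩ : ∃ i, U0 n i = (W : Set X) ∧ x ∈ U0 n i := by
      obtain ⟨i, hi⟩ := (hfib.diff (hbadI n x)).nonempty
      exact ⟨i, hi.1, not_not.mp hi.2⟩
    have : x ∈ (W : Set X) := hiW ▸ hix
    rw [Set.mem_setOf_eq] at hi0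
    rw [hi0]
    exact this
  by_cases hT : {n | ¬ P n}.Finite
  · refine ⟨fun n => if hPn : P n then hPn.choose else 0, fun x => ?_⟩
    apply squeeze_zero_norm' (a := fun n : ℕ => 1 / ((n : ℝ) + 1)) ?_
      tendsto_one_div_add_atTop_nhds_zero_nat
    have hev : ∀ᶠ n in atTop, P n := by
      rw [← Nat.cofinite_eq_atTop]
      filter_upwards [hT.eventually_cofinite_notMem] with n hn
      simpa using hn
    filter_upwards [hev] with n hPn
    rw [dif_pos hPn]
    have := hPn.choose_spec x
    rw [Set.mem_setOf_eq] at this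
    simpa [Real.norm_eq_abs] using this.le
  · set T : Set ℕ := {n | ¬ P n} with hTdef
    haveI : Infinite T := Set.infinite_coe_iff.mpr hT
    obtain ⟨dT⟩ := nonempty_denumerable ↥T
    let e : ℕ ≃ T := (@Denumerable.eqv T dT).symm
    set 𝒢 : ℕ → Set (Set X) := fun k => Set.range (U0 ((e k : ℕ))) with h𝒢def
    have h𝒢inf : ∀ k, (𝒢 k).Infinite := by
      intro k hfin
      exact (e k).2 (hPfin _ hfin)
    obtain ⟨g, hginj, hgmem⟩ := exists_disjoint_selection 𝒢 h𝒢inf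
    set 𝒢' : ℕ → Set (Set X) := fun k => Set.range (fun j => g (k, j)) with h𝒢'def
    have hcov : ∀ k, IsGammaCover (𝒢' k) := by
      intro k
      refine ⟨?_, ?_, ?_⟩
      · refine Set.infinite_range_of_injective (fun j j' hjj' => ?_)
        have := hginj hjj'
        exact (Prod.mk.injEq _ _ _ _ ▸ this).2
      · rintro U ⟨j, rfl⟩
        obtain ⟨i, hi⟩ := hgmem k j
        show IsOpen (g (k, j))
        rw [← hi]
        exact hopen _ _
      · intro x
        have hsub : {U ∈ 𝒢' k | x ∉ U} ⊆ U0 ((e k : ℕ)) '' {i | x ∉ U0 ((e k : ℕ)) i} := by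
          rintro U ⟨⟨j, rfl⟩, hxU⟩
          obtain ⟨i, hi⟩ := hgmem k j
          have hxU' : x ∉ g (k, j) := hxU
          refine ⟨i, ?_, hi⟩
          rw [Set.mem_setOf_eq, hi]
          exact hxU'
        exact ((hbadI _ x).image _).subset hsub
    obtain ⟨V, hVmem, hVcov⟩ := h 𝒢' hcov
    have hVinj : Function.Injective V := by
      intro k l hkl
      obtain ⟨j, hj⟩ := hVmem k
      obtain ⟨j', hj'⟩ := hVmem l
      have : g (k, j) = g (l, j') := by
        rw [show g (k, j) = V k from hj, show g (l, j') = V l from hj', hkl]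
      exact (Prod.mk.injEq _ _ _ _ ▸ hginj this).1
    have hVG : ∀ k, V k ∈ Set.range (U0 ((e k : ℕ))) := by
      intro k
      obtain ⟨j, hj⟩ := hVmem k
      rw [← show g (k, j) = V k from hj]
      exact hgmem k j
    choose idx hidx using hVG
    refine ⟨fun n => if hPn : P n then hPn.choose else idx (e.symm ⟨n, hPn⟩), fun x => ?_⟩
    apply squeeze_zero_norm' (a := fun n : ℕ => 1 / ((n : ℝ) + 1)) ?_
      tendsto_one_div_add_atTop_nhds_zero_nat
    have hbadK : {k | x ∉ V k}.Finite := by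
      have hb := hVcov.2.2 x
      have heq : {k | x ∉ V k} = V ⁻¹' {U ∈ Set.range V | x ∉ U} := by
        ext k
        simp [Set.mem_setOf_eq, Set.mem_preimage]
      rw [heq]
      exact hb.preimage hVinj.injOn
    have hsubn : {n | ¬ x ∈ U0 n (if hPn : P n then hPn.choose else idx (e.symm ⟨n, hPn⟩))} ⊆
        (fun k => ((e k : T) : ℕ)) '' {k | x ∉ V k} := by
      intro n hn
      rw [Set.mem_setOf_eq] at hn
      by_cases hPn : P n
      · exact absurd (by rw [dif_pos hPn]; exact hPn.choose_spec x) hn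
      · rw [dif_neg hPn] at hn
        set k := e.symm ⟨n, hPn⟩ with hk
        have hek : ((e k : T) : ℕ) = n := by
          rw [hk, e.apply_symm_apply]
        refine ⟨k, ?_, hek⟩
        rw [Set.mem_setOf_eq]
        intro hxV
        rw [← hidx k] at hxV
        rw [hek] at hxV
        exact hn hxV
    have hfinN : {n | ¬ x ∈ U0 n (if hPn : P n then hPn.choose else
        idx (e.symm ⟨n, hPn⟩))}.Finite := (hbadK.image _).subset hsubn
    have hev : ∀ᶠ n in atTop, x ∈ U0 n (if hPn : P n then hPn.choose else
        idx (e.symm ⟨n, hPn⟩)) := by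
      rw [← Nat.cofinite_eq_atTop]
      filter_upwards [hfinN.eventually_cofinite_notMem] with n hn
      simpa using hn
    filter_upwards [hev] with n hn
    rw [Set.mem_setOf_eq] at hn
    simpa [Real.norm_eq_abs] using hn.le
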